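/- Consider three players a, b, c with strict weak order preferences on O = {x, y, z, t} given by z ≺_a y ≺_a x with y ∼_a t (t incomparable to y, so z ≺_a t ≺_a x); t ≺_b z ≺_b y with z ∼_b x (so t ≺_b x ≺_b y); and x ≺_c t ≺_c y with y ∼_c z (so x ≺_c t ≺_c z). Consider the game on the full binary tree T = {0,1}^* in which the node 0^n (the all-continue position) is owned by a if n ≡ 0 (mod 3), by b if n ≡ 1 (mod 3), and by c if n ≡ 2 (mod 3) (the owner of any node not of the form 0^n is irrelevant, say a), and whose outcome function v assigns: v(p) = x if p = 000⋯; otherwise, if the first occurrence of 1 in p is at position n (0-indexed), then v(p) = y if n ≡ 0 (mod 3), v(p) = z if n ≡ 1 (mod 3), and v(p) = t if n ≡ 2 (mod 3). This game has no subgame perfect equilibrium. -/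

import Mathlib

/-! Basic setup: trees of finite sequences, their branches, the topology on the set of
branches, the Hausdorff difference hierarchy, quasi-difference sets, and infinite
games in extensive form. -/

/-- `T` is a tree over `α`: a set of finite sequences closed under taking prefixes. -/
def IsTree {α : Type*} (T : Set (List α)) : Prop :=
  ∀ ⦃γ δ : List α⦄, γ <+: δ → δ ∈ T → γ ∈ T

/-- `succ(T, γ)`: the nodes of `T` extending `γ` and of length `|γ| + 1`. -/
def treeSucc {α : Type*} (T : Set (List α)) (γ : List α) : Set (List α) :=
  {δ | δ ∈ T ∧ γ <+: δ ∧ δ.length = γ.length + 1}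

/-- `T` is pruned if every node has a successor. -/
def IsPruned {α : Type*} (T : Set (List α)) : Prop :=
  ∀ γ ∈ T, (treeSucc T γ).Nonempty

/-- The finite prefix of length `n` of an infinite sequence `p`. -/
def playPrefix {α : Type*} (p : ℕ → α) (n : ℕ) : List α :=
  List.ofFn fun i : Fin n => p i

/-- `[T]`: the infinite sequences all of whose finite prefixes lie in `T`. -/
def Body {α : Type*} (T : Set (List α)) : Set (ℕ → α) :=
  {p | ∀ n : ℕ, playPrefix p n ∈ T}

/-- `γ[T_γ]`: the elements of `[T]` extending the node `γ`. -/
def cylinder {α : Type*} (T : Set (List α)) (γ : List α) : Set (ℕ → α) :=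
  {p | p ∈ Body T ∧ playPrefix p γ.length = γ}

/-- Open subsets of `[T]`: the unions of basic sets `γ[T_γ]`, `γ ∈ T`. -/
def IsOpenIn {α : Type*} (T : Set (List α)) (A : Set (ℕ → α)) : Prop :=
  ∃ S ⊆ T, A = ⋃ γ ∈ S, cylinder T γ

/-- Closed subsets of `[T]`: complements in `[T]` of open subsets of `[T]`. -/
def IsClosedIn {α : Type*} (T : Set (List α)) (A : Set (ℕ → α)) : Prop :=
  A ⊆ Body T ∧ IsOpenIn T (Body T \ A)

/-- Borel subsets of `[T]`: members of the σ-algebra generated by the open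
subsets of `[T]` that are themselves included in `[T]`. -/
def IsBorelIn {α : Type*} (T : Set (List α)) (X : Set (ℕ → α)) : Prop :=
  X ⊆ Body T ∧
    @MeasurableSet (ℕ → α) (MeasurableSpace.generateFrom {A | IsOpenIn T A}) X

/-- `D_θ((A_η)_{η<θ})`: the set of `x ∈ ⋃_{η<θ} A_η` such that the least `η < θ`
with `x ∈ A_η` has parity opposite to that of `θ`. -/
noncomputable def Dset {α : Type*} (θ : Ordinal.{0}) (A : Ordinal.{0} → Set (ℕ → α)) :
    Set (ℕ → α) :=
  {x | (∃ η < θ, x ∈ A η) ∧ sInf {η | η < θ ∧ x ∈ A η} % 2 ≠ θ % 2}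

/-- `D_θ([T])`: all sets of the form `D_θ((A_η)_{η<θ})` for an `⊆`-increasing family
of open subsets of `[T]`. -/
def Dclass {α : Type*} (T : Set (List α)) (θ : Ordinal.{0}) : Set (Set (ℕ → α)) :=
  {X | ∃ A : Ordinal.{0} → Set (ℕ → α),
        (∀ η < θ, IsOpenIn T (A η)) ∧
        (∀ η₁ η₂, η₁ ≤ η₂ → η₂ < θ → A η₁ ⊆ A η₂) ∧
        X = Dset θ A}

/-- The quasi-difference sets `𝒟([T])`: open sets, unions of quasi-difference sets
placed below pairwise `⊑`-incomparable nodes, and complements in `[T]`. -/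
inductive QuasiDiff {α : Type*} (T : Set (List α)) : Set (ℕ → α) → Prop
  | isOpen : ∀ A, IsOpenIn T A → QuasiDiff T A
  | iUnion : ∀ (S : Set (List α)) (D : List α → Set (ℕ → α)),
      S ⊆ T → (S.Pairwise fun γ δ => ¬ γ <+: δ) →
      (∀ γ ∈ S, QuasiDiff T (D γ)) →
      (∀ γ ∈ S, D γ ⊆ cylinder T γ) →
      QuasiDiff T (⋃ γ ∈ S, D γ)
  | compl : ∀ A, QuasiDiff T A → QuasiDiff T (Body T \ A)

/-- An infinite game in extensive form: a tree `T` of finite plays, an owner function `d`,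
an outcome function `v` on infinite plays, and a preference relation for each player. -/
structure Game (α A O : Type*) where
  T : Set (List α)
  d : List α → A
  v : (ℕ → α) → O
  pref : A → O → O → Prop

/-- The infinite sequence starting with `γ` and continuing with `p`. -/
def listExtend {α : Type*} (γ : List α) (p : ℕ → α) : ℕ → α :=
  fun n => if h : n < γ.length then γ.get ⟨n, h⟩ else p (n - γ.length)

/-- The subgame `g_γ` of `g` at a node `γ`. -/
def Game.sub {α A O : Type*} (g : Game α A O) (γ : List α) : Game α A O where
  T := {δ | γ ++ δ ∈ g.T}
  d := fun δ => g.d (γ ++ δ)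
  v := fun p => g.v (listExtend γ p)
  pref := g.pref

/-- A strategy profile on `T`: it maps each node of `T` to a successor. -/
def IsProfile {α : Type*} (T : Set (List α)) (s : List α → List α) : Prop :=
  ∀ γ ∈ T, s γ ∈ treeSucc T γ

/-- The sequence of nodes obtained from `γ` by repeatedly applying `s`. -/
def iterNode {α : Type*} (s : List α → List α) (γ : List α) : ℕ → List α
  | 0 => γ
  | n + 1 => s (iterNode s γ n)

/-- The play `p^ε(s)` induced by `s` at the root. -/
def inducedPlay {α : Type*} [Inhabited α] (s : List α → List α) : ℕ → α :=
  fun n => (iterNode s [] (n + 1)).getD n default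

/-- The subprofile `s_γ`, defined by `γ s_γ(δ) = s(γδ)`. -/
def subProfile {α : Type*} (γ : List α) (s : List α → List α) : List α → List α :=
  fun δ => (s (γ ++ δ)).drop γ.length

/-- `s` is a Nash equilibrium of `g`: no player `a` has a profitable deviation `s'`
differing from `s` only at nodes owned by `a`. -/
def IsNE {α A O : Type*} [Inhabited α] (g : Game α A O) (s : List α → List α) : Prop :=
  ¬ ∃ (a : A) (s' : List α → List α), IsProfile g.T s' ∧
      (∀ γ ∈ g.T, s γ ≠ s' γ → g.d γ = a) ∧
      g.pref a (g.v (inducedPlay s)) (g.v (inducedPlay s'))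

/-- `s` is a subgame perfect equilibrium of `g`: `s_γ` is an NE of `g_γ` for all `γ ∈ T`. -/
def IsSPE {α A O : Type*} [Inhabited α] (g : Game α A O) (s : List α → List α) : Prop :=
  ∀ γ ∈ g.T, IsNE (g.sub γ) (subProfile γ s)

/-- The outcomes occurring in `g`. -/
def OutcomesOf {α A O : Type*} (g : Game α A O) : Set O := g.v '' Body g.T

/-- `x ∈ Os` is Pareto-optimal in `Os`. -/
def ParetoOpt {A O : Type*} (pref : A → O → O → Prop) (Os : Set O) (x : O) : Prop :=
  x ∈ Os ∧ ∀ y ∈ Os, ∀ a, pref a x y → ∃ b, pref b y x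

/-- The outcome induced by the subprofile `s_γ` in the subgame `g_γ`. -/
def subOutcome {α A O : Type*} [Inhabited α] (g : Game α A O) (s : List α → List α)
    (γ : List α) : O :=
  (g.sub γ).v (inducedPlay (subProfile γ s))

/-- Global-Pareto SPE: an SPE inducing in every subgame an outcome that is
Pareto-optimal among the outcomes occurring in that subgame. -/
def IsGPSPE {α A O : Type*} [Inhabited α] (g : Game α A O) (s : List α → List α) : Prop :=
  IsSPE g s ∧ ∀ γ ∈ g.T, ParetoOpt g.pref (OutcomesOf (g.sub γ)) (subOutcome g s γ)

/-- An `x`-pseudo-leaf: a shortest node `γ ∈ T` such that only `x` occurs in `g_γ`. -/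
def IsPseudoLeaf {α A O : Type*} (g : Game α A O) (x : O) (γ : List α) : Prop :=
  γ ∈ g.T ∧ OutcomesOf (g.sub γ) = {x} ∧
    ∀ δ, δ <+: γ → δ ≠ γ → OutcomesOf (g.sub δ) ≠ {x}

/-- A strict weak order: irreflexive, transitive, with transitive complement. -/
def IsSWO {O : Type*} (r : O → O → Prop) : Prop :=
  (∀ x, ¬ r x x) ∧ (∀ x y z, r x y → r y z → r x z) ∧
  (∀ x y z, ¬ r x y → ¬ r y z → ¬ r x z)

/-- The SPE killer does not occur in the family of preferences `lt`. -/
def NoSPEKiller {A O : Type*} (lt : A → O → O → Prop) : Prop :=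
  ∀ a b : A, ∀ x y z : O, ¬ (lt a z y ∧ lt a y x ∧ lt b x z ∧ lt b z y)

/-- Ranks of the three strict weak order preferences on `O = {x, y, z, t} = {0, 1, 2, 3}`:
player `a = 0`: `z ≺ y ∼ t ≺ x`; player `b = 1`: `t ≺ z ∼ x ≺ y`;
player `c = 2`: `x ≺ t ≺ y ∼ z`. -/
def rank17 : Fin 3 → Fin 4 → ℕ := ![![2, 1, 0, 1], ![1, 2, 1, 0], ![0, 2, 2, 1]]

open scoped Classical Fin.NatCast in
/-- The three-player game on the full binary tree: at the all-continue node `0^n`, the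
owner is `a` if `n ≡ 0`, `b` if `n ≡ 1`, `c` if `n ≡ 2 (mod 3)`; the all-zero play has
outcome `x`, and a play whose first `1` is at position `n` has outcome `y`, `z`, `t`
according to `n mod 3`. Outcomes: `x = 0`, `y = 1`, `z = 2`, `t = 3`. -/
noncomputable def game17 : Game (Fin 2) (Fin 3) (Fin 4) where
  T := Set.univ
  d := fun γ => if ∀ c ∈ γ, c = 0 then (γ.length : Fin 3) else 0
  v := fun p => if h : ∃ n, p n ≠ 0 then ((Nat.find h % 3 + 1 : ℕ) : Fin 4) else 0
  pref := fun i u v => rank17 i u < rank17 i v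

open scoped Fin.NatCast

namespace Stmt17Aux

/-- all-zero node of length `n` -/
abbrev zl (n : ℕ) : List (Fin 2) := List.replicate n 0

lemma zl_succ (n : ℕ) : zl (n+1) = zl n ++ [0] := by
  simp [zl, List.replicate_succ']

lemma zl_append (m n : ℕ) : zl m ++ zl n = zl (m+n) := by
  simp [zl, ← List.replicate_add]

lemma getD_len (l : List (Fin 2)) (c d : Fin 2) : (l ++ [c]).getD l.length d = c := by
  simp [List.getD_append_right]

lemma getD_zl (j : ℕ) (c d : Fin 2) : (zl j ++ [c]).getD j d = c := by
  simpa using getD_len (zl j) c d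

/-- every node is mapped to an extension by one element -/
def Step (t : List (Fin 2) → List (Fin 2)) : Prop := ∀ γ, ∃ c, t γ = γ ++ [c]

lemma step_profile {T : Set (List (Fin 2))} (hT : ∀ x : List (Fin 2), x ∈ T)
    {t} (h : Step t) : IsProfile T t := by
  intro γ _
  obtain ⟨c, hc⟩ := h γ
  exact ⟨hT _, by rw [hc]; exact ⟨[c], rfl⟩, by rw [hc]; simp⟩

lemma profile_step {t} (h : IsProfile (Set.univ : Set (List (Fin 2))) t) : Step t := by
  intro γ
  obtain ⟨-, ⟨u, hu⟩, hlen⟩ := h γ trivial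
  have : u.length = 1 := by
    have := congrArg List.length hu
    simp at this; omega
  obtain ⟨a, rfl⟩ := List.length_eq_one_iff.mp this
  exact ⟨a, hu.symm⟩

lemma iter_zeros {t : List (Fin 2) → List (Fin 2)} (J : ℕ)
    (h : ∀ j, j < J → t (zl j) = zl (j+1)) :
    ∀ j, j ≤ J → iterNode t [] j = zl j := by
  intro j hj
  induction j with
  | zero => rfl
  | succ j ih =>
      have : iterNode t [] (j+1) = t (iterNode t [] j) := rfl
      rw [this, ih (by omega), h j (by omega)]

lemma play_eq {t : List (Fin 2) → List (Fin 2)} {k : ℕ} (hk : iterNode t [] k = zl k) :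
    inducedPlay t k = (t (zl k)).getD k 0 := by
  show (iterNode t [] (k+1)).getD k default = _
  rw [show iterNode t [] (k+1) = t (iterNode t [] k) from rfl, hk]
  rfl

lemma devplay0 (t : List (Fin 2) → List (Fin 2)) (J : ℕ)
    (h : ∀ j, j < J → t (zl j) = zl (j+1)) :
    ∀ k, k < J → inducedPlay t k = 0 := by
  intro k hk
  rw [play_eq (iter_zeros J h k hk.le), h k hk, zl_succ]
  exact getD_zl k 0 _

lemma devplay1 (t : List (Fin 2) → List (Fin 2)) (J : ℕ)
    (h : ∀ j, j < J → t (zl j) = zl (j+1)) (hstop : t (zl J) = zl J ++ [1]) :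
    inducedPlay t J = 1 := by
  rw [play_eq (iter_zeros J h J le_rfl), hstop]
  exact getD_zl J 1 _

lemma le_lt {p : ℕ → Fin 2} {n k : ℕ} (h : k < n) : listExtend (zl n) p k = 0 := by
  unfold listExtend
  rw [dif_pos (by simpa [zl] using h)]
  simp [zl]

lemma le_ge {p : ℕ → Fin 2} {n k : ℕ} (h : n ≤ k) : listExtend (zl n) p k = p (k - n) := by
  unfold listExtend
  rw [dif_neg (by simp [zl]; omega)]
  simp [zl]

open scoped Classical in
lemma v_find {Q : ℕ → Fin 2} {N : ℕ} (h0 : ∀ k, k < N → Q k = 0) (h1 : Q N = 1) :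
    game17.v Q = ((N % 3 + 1 : ℕ) : Fin 4) := by
  have hex : ∃ n, Q n ≠ 0 := ⟨N, by rw [h1]; decide⟩
  have he : game17.v Q = if h : ∃ n, Q n ≠ 0 then ((Nat.find h % 3 + 1 : ℕ) : Fin 4) else 0 := rfl
  rw [he, dif_pos hex]
  have : Nat.find hex = N := by
    rw [Nat.find_eq_iff]
    exact ⟨by rw [h1]; decide, fun k hk => by simp [h0 k hk]⟩
  rw [this]

open scoped Classical in
lemma v_zero {Q : ℕ → Fin 2} (h : ∀ k, Q k = 0) : game17.v Q = 0 := by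
  have he : game17.v Q = if h : ∃ n, Q n ≠ 0 then ((Nat.find h % 3 + 1 : ℕ) : Fin 4) else 0 := rfl
  rw [he, dif_neg]
  push_neg
  intro n; simp [h n]

lemma vstop (t : List (Fin 2) → List (Fin 2)) (n q : ℕ) (hnq : n ≤ q)
    (h : ∀ j, j < q - n → t (zl j) = zl (j+1)) (hstop : t (zl (q-n)) = zl (q-n) ++ [1]) :
    game17.v (listExtend (zl n) (inducedPlay t)) = ((q % 3 + 1 : ℕ) : Fin 4) := by
  apply v_find (N := q)
  · intro k hk
    rcases lt_or_ge k n with h' | h'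
    · exact le_lt h'
    · rw [le_ge h']; exact devplay0 t _ h _ (by omega)
  · rw [le_ge hnq]; exact devplay1 t _ h hstop

lemma vnostop (t : List (Fin 2) → List (Fin 2)) (n : ℕ)
    (h : ∀ j, t (zl j) = zl (j+1)) :
    game17.v (listExtend (zl n) (inducedPlay t)) = 0 := by
  apply v_zero
  intro k
  rcases lt_or_ge k n with h' | h'
  · exact le_lt h'
  · rw [le_ge h']; exact devplay0 t (k - n + 1) (fun j _ => h j) _ (by omega)

lemma fin3_cast {a b : ℕ} (h : a % 3 = b % 3) : (a : Fin 3) = (b : Fin 3) := by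
  apply Fin.ext; rw [Fin.val_natCast, Fin.val_natCast, h]

lemma rank_cast (a : ℕ) (u : Fin 4) : rank17 (a : Fin 3) u = rank17 ((a % 3 : ℕ) : Fin 3) u := by
  exact congrArg (fun i => rank17 i u) (fin3_cast (by omega))

end Stmt17Aux

namespace Stmt17Aux

variable (s : List (Fin 2) → List (Fin 2))

/-- the choice of `s` at the all-zero node of length `n` -/
def sig (n : ℕ) : Fin 2 := (s (zl n)).getD n 0

variable {s}

lemma hmove (hs : Step s) (n : ℕ) : s (zl n) = zl n ++ [sig s n] := by
  obtain ⟨c, hc⟩ := hs (zl n)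
  have : sig s n = c := by rw [sig, hc]; exact getD_zl n c 0
  rw [this, hc]

lemma hsub (hs : Step s) (n j : ℕ) :
    subProfile (zl n) s (zl j) = zl j ++ [sig s (n + j)] := by
  show (s (zl n ++ zl j)).drop (zl n).length = _
  rw [zl_append, hmove hs (n+j), ← zl_append n j, List.append_assoc, List.drop_left]

lemma hsubStep (hs : Step s) (n : ℕ) : Step (subProfile (zl n) s) := by
  intro δ
  obtain ⟨c, hc⟩ := hs (zl n ++ δ)
  refine ⟨c, ?_⟩
  show (s (zl n ++ δ)).drop (zl n).length = _
  rw [hc, List.append_assoc, List.drop_left]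

variable (s)

/-- the outcome induced by `s` in the subgame at `0^n` -/
noncomputable def Fo (n : ℕ) : Fin 4 :=
  game17.v (listExtend (zl n) (inducedPlay (subProfile (zl n) s)))

variable {s}

lemma hFmain (hs : Step s) (n q : ℕ) (hnq : n ≤ q) (hq : sig s q = 1)
    (hmin : ∀ k, n ≤ k → k < q → sig s k = 0) :
    Fo s n = ((q % 3 + 1 : ℕ) : Fin 4) := by
  apply vstop _ n q hnq
  · intro j hj
    rw [hsub hs n j, hmin (n+j) (by omega) (by omega), ← zl_succ]
  · rw [hsub hs n (q - n), (by omega : n + (q - n) = q), hq]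

lemma hFnone (hs : Step s) (n : ℕ) (h : ∀ k, n ≤ k → sig s k = 0) : Fo s n = 0 := by
  apply vnostop
  intro j
  rw [hsub hs n j, h (n+j) (by omega), ← zl_succ]

variable (s)

/-- deviation: stop immediately at the root of the subgame -/
def stopdev (n : ℕ) : List (Fin 2) → List (Fin 2) :=
  fun δ => if δ = [] then [1] else subProfile (zl n) s δ

/-- deviation: never stop at own nodes -/
def devf (m : ℕ) : List (Fin 2) → List (Fin 2) :=
  fun δ => if (∀ c ∈ δ, c = (0 : Fin 2)) ∧ (m + δ.length) % 3 = m % 3 then δ ++ [0]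
           else subProfile (zl m) s δ

variable {s}

lemma rank_own (n : ℕ) : rank17 (n : Fin 3) ((n % 3 + 1 : ℕ) : Fin 4) = 1 := by
  rw [rank_cast]
  rcases (by omega : n % 3 = 0 ∨ n % 3 = 1 ∨ n % 3 = 2) with h | h | h <;> rw [h] <;> decide

section SPE

variable (hs : IsProfile game17.T s) (hspe : IsSPE game17 s)
include hs hspe

lemma hA (n : ℕ) : 1 ≤ rank17 (n : Fin 3) (Fo s n) := by
  have hst : Step s := profile_step hs
  by_contra hlt
  push_neg at hlt
  apply hspe (zl n) trivial
  refine ⟨(n : Fin 3), stopdev s n, ?_, ?_, ?_⟩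
  · apply step_profile (fun _ => trivial)
    intro δ
    by_cases hδ : δ = []
    · subst hδ; exact ⟨1, by simp [stopdev]⟩
    · rw [stopdev, if_neg hδ]; exact hsubStep hst n δ
  · intro δ _ hne
    by_cases hδ : δ = []
    · subst hδ
      show game17.d (zl n ++ []) = _
      rw [List.append_nil]
      show (if ∀ c ∈ zl n, c = 0 then ((zl n).length : Fin 3) else 0) = _
      rw [if_pos (fun c hc => List.eq_of_mem_replicate hc)]
      simp [zl]
    · rw [stopdev, if_neg hδ] at hne; exact absurd rfl hne
  · have hV : game17.v (listExtend (zl n) (inducedPlay (stopdev s n)))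
        = ((n % 3 + 1 : ℕ) : Fin 4) := by
      apply vstop _ n n le_rfl (fun j hj => absurd hj (by omega))
      rw [Nat.sub_self]
      simp [stopdev, zl]
    show rank17 (n : Fin 3) (Fo s n)
        < rank17 (n : Fin 3) (game17.v (listExtend (zl n) (inducedPlay (stopdev s n))))
    rw [hV, rank_own]
    exact hlt

end SPE

lemma devf_z (hs : Step s) (m j : ℕ) (h : (m + j) % 3 = m % 3 ∨ sig s (m + j) = 0) :
    devf s m (zl j) = zl (j + 1) := by
  show (if (∀ c ∈ zl j, c = (0 : Fin 2)) ∧ (m + (zl j).length) % 3 = m % 3 then zl j ++ [0]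
        else subProfile (zl m) s (zl j)) = zl (j + 1)
  have hlen : (zl j).length = j := by simp [zl]
  by_cases hc : (m + j) % 3 = m % 3
  · rw [if_pos ⟨fun c hc' => List.eq_of_mem_replicate hc', by rw [hlen]; exact hc⟩, zl_succ]
  · have hσ0 : sig s (m + j) = 0 := h.resolve_left hc
    rw [if_neg (by rw [hlen]; exact fun hh => hc hh.2), hsub hs m j, hσ0, ← zl_succ]

lemma devf_stop (hs : Step s) (m q : ℕ) (hmq : m ≤ q) (hq2 : q % 3 ≠ m % 3)
    (hq3 : sig s q = 1) : devf s m (zl (q - m)) = zl (q - m) ++ [1] := by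
  show (if (∀ c ∈ zl (q-m), c = (0 : Fin 2)) ∧ (m + (zl (q-m)).length) % 3 = m % 3
        then zl (q-m) ++ [0] else subProfile (zl m) s (zl (q-m))) = zl (q - m) ++ [1]
  have hlen : (zl (q-m)).length = q - m := by simp [zl]
  rw [if_neg (by rw [hlen, (by omega : m + (q - m) = q)]; exact fun hh => hq2 hh.2),
      hsub hs m (q - m), (by omega : m + (q - m) = q), hq3]

section SPE2

variable (hs : IsProfile game17.T s) (hspe : IsSPE game17 s)
include hs hspe

lemma hBcore (m : ℕ) (hm : sig s m = 1) :
    ¬ 1 < rank17 (m : Fin 3) (game17.v (listExtend (zl m) (inducedPlay (devf s m)))) := by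
  have hst : Step s := profile_step hs
  intro hlt
  apply hspe (zl m) trivial
  refine ⟨(m : Fin 3), devf s m, ?_, ?_, ?_⟩
  · apply step_profile (fun _ => trivial)
    intro δ
    by_cases hc : (∀ c ∈ δ, c = (0 : Fin 2)) ∧ (m + δ.length) % 3 = m % 3
    · rw [devf, if_pos hc]; exact ⟨0, rfl⟩
    · rw [devf, if_neg hc]; exact hsubStep hst m δ
  · intro δ _ hne
    by_cases hc : (∀ c ∈ δ, c = (0 : Fin 2)) ∧ (m + δ.length) % 3 = m % 3
    · show game17.d (zl m ++ δ) = _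
      show (if ∀ c ∈ zl m ++ δ, c = 0 then (((zl m ++ δ).length : ℕ) : Fin 3) else 0) = _
      rw [if_pos]
      · have hlen : (zl m ++ δ).length = m + δ.length := by simp [zl]
        rw [hlen]; exact fin3_cast hc.2
      · intro c hcmem
        rcases List.mem_append.mp hcmem with h | h
        · exact List.eq_of_mem_replicate h
        · exact hc.1 c h
    · rw [devf, if_neg hc] at hne; exact absurd rfl hne
  · have hU : Fo s m = ((m % 3 + 1 : ℕ) : Fin 4) :=
      hFmain hst m m le_rfl hm (fun k h1 h2 => absurd h1 (by omega))
    show rank17 (m : Fin 3) (Fo s m)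
        < rank17 (m : Fin 3) (game17.v (listExtend (zl m) (inducedPlay (devf s m))))
    rw [hU, rank_own]
    exact hlt

lemma hB1 (m q : ℕ) (hm : sig s m = 1) (hq1 : m ≤ q) (hq2 : q % 3 ≠ m % 3)
    (hq3 : sig s q = 1)
    (hqmin : ∀ k, m ≤ k → k % 3 ≠ m % 3 → k < q → sig s k = 0) :
    ¬ 1 < rank17 (m : Fin 3) ((q % 3 + 1 : ℕ) : Fin 4) := by
  have hst : Step s := profile_step hs
  have hV : game17.v (listExtend (zl m) (inducedPlay (devf s m)))
      = ((q % 3 + 1 : ℕ) : Fin 4) := by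
    apply vstop _ m q hq1
    · intro j hj
      apply devf_z hst
      by_cases hc : (m + j) % 3 = m % 3
      · exact Or.inl hc
      · exact Or.inr (hqmin (m + j) (by omega) hc (by omega))
    · exact devf_stop hst m _ hq1 hq2 hq3
  have := hBcore hs hspe m hm
  rw [hV] at this
  exact this

lemma hB2 (m : ℕ) (hm : sig s m = 1)
    (hz : ∀ q, m ≤ q → q % 3 ≠ m % 3 → sig s q = 0) :
    ¬ 1 < rank17 (m : Fin 3) (0 : Fin 4) := by
  have hst : Step s := profile_step hs
  have hV : game17.v (listExtend (zl m) (inducedPlay (devf s m))) = 0 := by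
    apply vnostop
    intro j
    apply devf_z hst
    by_cases hc : (m + j) % 3 = m % 3
    · exact Or.inl hc
    · exact Or.inr (hz (m + j) (by omega) hc)
  have := hBcore hs hspe m hm
  rw [hV] at this
  exact this

lemma hcof (n : ℕ) : ∃ m, n ≤ m ∧ sig s m = 1 := by
  have hst : Step s := profile_step hs
  by_contra h
  push_neg at h
  have hz : ∀ m, n ≤ m → sig s m = 0 := by
    intro m hm; have := h m hm; omega
  have hF : Fo s (3*n+2) = 0 := hFnone hst _ (fun k hk => hz k (by omega))
  have hAk := hA hs hspe (3*n+2)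
  rw [hF, rank_cast, (by omega : (3*n+2) % 3 = 2)] at hAk
  exact absurd hAk (by decide)

lemma hfirst (n : ℕ) : ∃ q, n ≤ q ∧ sig s q = 1 ∧ Fo s n = ((q % 3 + 1 : ℕ) : Fin 4) := by
  have hst : Step s := profile_step hs
  have hex : ∃ m, n ≤ m ∧ sig s m = 1 := hcof hs hspe n
  refine ⟨Nat.find hex, (Nat.find_spec hex).1, (Nat.find_spec hex).2, ?_⟩
  apply hFmain hst n _ (Nat.find_spec hex).1 (Nat.find_spec hex).2
  intro k h1 h2
  have := Nat.find_min hex h2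
  have : sig s k ≠ 1 := fun hk => this ⟨h1, hk⟩
  omega

lemma hminwit (m : ℕ) (hex : ∃ q, m ≤ q ∧ q % 3 ≠ m % 3 ∧ sig s q = 1) :
    ∃ q, m ≤ q ∧ q % 3 ≠ m % 3 ∧ sig s q = 1 ∧
      ∀ k, m ≤ k → k % 3 ≠ m % 3 → k < q → sig s k = 0 := by
  obtain ⟨h1, h2, h3⟩ := Nat.find_spec hex
  refine ⟨Nat.find hex, h1, h2, h3, ?_⟩
  intro k hk1 hk2 hk3
  have := Nat.find_min hex hk3
  have : sig s k ≠ 1 := fun hh => this ⟨hk1, hk2, hh⟩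
  omega

lemma hno2 (m : ℕ) (hm : sig s m = 1) : m % 3 ≠ 2 := by
  intro h2
  by_cases hex : ∃ q, m ≤ q ∧ q % 3 ≠ m % 3 ∧ sig s q = 1
  · obtain ⟨q, hq1, hq2, hq3, hqmin⟩ := hminwit hs hspe m hex
    apply hB1 hs hspe m q hm hq1 hq2 hq3 (fun k a b c => hqmin k a b c)
    rw [rank_cast, h2]
    rcases (by omega : q % 3 = 0 ∨ q % 3 = 1) with h | h <;>
      rw [h] <;> decide
  · push_neg at hex
    have hz : ∀ q, m ≤ q → q % 3 ≠ m % 3 → sig s q = 0 := by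
      intro q h1 h3; have := hex q h1 h3; omega
    obtain ⟨q₂, hq1, hq2, hq3⟩ := hfirst hs hspe (3*m+4)
    have hq2' : q₂ % 3 = 2 := by
      by_contra hne
      have := hz q₂ (by omega) (by omega)
      omega
    have hAk := hA hs hspe (3*m+4)
    rw [hq3, rank_cast, (by omega : (3*m+4) % 3 = 1), hq2'] at hAk
    exact absurd hAk (by decide)

lemma hno1 (m : ℕ) (hm : sig s m = 1) : m % 3 ≠ 1 := by
  intro h1
  by_cases hex : ∃ q, m ≤ q ∧ q % 3 ≠ m % 3 ∧ sig s q = 1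
  · obtain ⟨q, hq1, hq2, hq3, hqmin⟩ := hminwit hs hspe m hex
    have hq0 : q % 3 = 0 := by
      have := hno2 hs hspe _ hq3
      omega
    apply hB1 hs hspe m q hm hq1 hq2 hq3 (fun k a b c => hqmin k a b c)
    rw [rank_cast, h1, hq0]
    decide
  · push_neg at hex
    have hz : ∀ q, m ≤ q → q % 3 ≠ m % 3 → sig s q = 0 := by
      intro q hh1 h3; have := hex q hh1 h3; omega
    obtain ⟨q₂, hq1, hq2, hq3⟩ := hfirst hs hspe (3*m+3)
    have hq2' : q₂ % 3 = 1 := by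
      by_contra hne
      have := hz q₂ (by omega) (by omega)
      omega
    have hAk := hA hs hspe (3*m+3)
    rw [hq3, rank_cast, (by omega : (3*m+3) % 3 = 0), hq2'] at hAk
    exact absurd hAk (by decide)

end SPE2

end Stmt17Aux

open Stmt17Aux

/-- the above three-player game has no subgame perfect equilibrium. -/
theorem stmt17 : ¬ ∃ s, IsProfile game17.T s ∧ IsSPE game17 s := by
  rintro ⟨s, hs, hspe⟩
  obtain ⟨q, -, hq, -⟩ := hfirst hs hspe 0
  have h0 : q % 3 = 0 := by
    have := hno1 hs hspe q hq
    have := hno2 hs hspe q hq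
    omega
  by_cases hex : ∃ q', q ≤ q' ∧ q' % 3 ≠ q % 3 ∧ sig s q' = 1
  · obtain ⟨h1, h2, h3⟩ := Nat.find_spec hex
    have := hno1 hs hspe _ h3
    have := hno2 hs hspe _ h3
    omega
  · push_neg at hex
    have hz : ∀ q', q ≤ q' → q' % 3 ≠ q % 3 → sig s q' = 0 := by
      intro q' hh1 hh3; have := hex q' hh1 hh3; omega
    apply hB2 hs hspe q hq hz
    rw [rank_cast, h0]
    decide
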